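/- For every natural number n and every natural number i ≥ 1, r₁₁(n+i) = r₁₁(n) + i − Σ_{j=1}^{i} v₂(n+j) + r₀₁(n) − r₀₁(n+i), as an identity of integers. -/

import Mathlib

/-- Number of occurrences of the block `11` in the binary expansion of `n`. -/
def r11 (n : ℕ) : ℕ :=
  ((Finset.range n).filter (fun i => n.testBit i = true ∧ n.testBit (i + 1) = true)).card

/-- Number of occurrences of the block `01` in the binary expansion of `n`,
counting the occurrence at the most significant digit. -/
def r01 (n : ℕ) : ℕ :=
  ((Finset.range n).filter (fun i => n.testBit i = true ∧ n.testBit (i + 1) = false)).card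

def pc (m : ℕ) : ℕ := ∑ j ∈ Finset.range m, (if m.testBit j then 1 else 0)

lemma pc_eq (m N : ℕ) (h : m < 2 ^ N) :
    pc m = ∑ j ∈ Finset.range N, (if m.testBit j then 1 else 0) := by
  have key : ∀ A B : ℕ, A ≤ B → m < 2 ^ A →
      (∑ j ∈ Finset.range A, (if m.testBit j then 1 else 0)) =
      ∑ j ∈ Finset.range B, (if m.testBit j then 1 else 0) := by
    intro A B hAB hA
    refine Finset.sum_subset (Finset.range_subset_range.mpr hAB) ?_
    intro x _ hx
    simp only [Finset.mem_range, not_lt] at hx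
    have : m.testBit x = false :=
      Nat.testBit_eq_false_of_lt (lt_of_lt_of_le hA (Nat.pow_le_pow_right (by norm_num) hx))
    simp [this]
  rcases le_total m N with hc | hc
  · exact key m N hc (Nat.lt_two_pow_self (n := m))
  · exact (key N m hc h).symm

lemma testBit_mul_two_succ (k j : ℕ) : (2 * k).testBit (j + 1) = k.testBit j := by
  rw [Nat.testBit_succ]; congr 1; omega

lemma testBit_mul_two_add_one_succ (k j : ℕ) : (2 * k + 1).testBit (j + 1) = k.testBit j := by
  rw [Nat.testBit_succ]; congr 1; omega

lemma pc_double (k : ℕ) : pc (2 * k) = pc k := by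
  have hk := Nat.lt_two_pow_self (n := k)
  rw [pc_eq (2 * k) (k + 1) (by rw [pow_succ]; omega), pc, Finset.sum_range_succ']
  have h0 : (2 * k).testBit 0 = false := by
    simp [Nat.testBit_zero, Nat.mul_mod_right]
  rw [h0]
  simp only [testBit_mul_two_succ, if_false, add_zero, Bool.false_eq_true]

lemma pc_double_add_one (k : ℕ) : pc (2 * k + 1) = pc k + 1 := by
  have hk := Nat.lt_two_pow_self (n := k)
  rw [pc_eq (2 * k + 1) (k + 1) (by rw [pow_succ]; omega), Finset.sum_range_succ']
  have h0 : (2 * k + 1).testBit 0 = true := by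
    simp [Nat.testBit_zero]
  rw [h0]
  simp only [testBit_mul_two_add_one_succ, if_true, pc]

lemma pc_step : ∀ m : ℕ, (pc (m + 1) : ℤ) = pc m + 1 - padicValNat 2 (m + 1) := by
  intro m
  induction m using Nat.strong_induction_on with
  | _ m ih =>
    rcases Nat.even_or_odd (m + 1) with ⟨k, hk⟩ | ⟨k, hk⟩
    · obtain ⟨j, rfl⟩ : ∃ j, k = j + 1 := ⟨k - 1, by omega⟩
      have hm : m = 2 * j + 1 := by omega
      have hv : padicValNat 2 (m + 1) = padicValNat 2 (j + 1) + 1 := by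
        rw [show m + 1 = 2 * (j + 1) by omega,
          padicValNat.mul (by norm_num) (by omega), padicValNat.self (by norm_num)]
        omega
      have hih := ih j (by omega)
      have e1 : pc (m + 1) = pc (j + 1) := by
        rw [show m + 1 = 2 * (j + 1) by omega, pc_double]
      have e2 : pc m = pc j + 1 := by rw [hm, pc_double_add_one]
      rw [e1, e2, hv, hih]; push_cast; ring
    · have hm : m = 2 * k := by omega
      have hv : padicValNat 2 (m + 1) = 0 := by
        apply padicValNat.eq_zero_of_not_dvd
        omega
      have e1 : pc (m + 1) = pc k + 1 := by
        rw [show m + 1 = 2 * k + 1 by omega, pc_double_add_one]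
      have e2 : pc m = pc k := by rw [hm, pc_double]
      rw [e1, e2, hv]; push_cast; ring

lemma pc_sum (n : ℕ) : ∀ i : ℕ, (pc (n + i) : ℤ) =
    pc n + i - ∑ j ∈ Finset.Icc 1 i, (padicValNat 2 (n + j) : ℤ) := by
  intro i
  induction i with
  | zero => simp
  | succ i ih =>
    rw [Finset.sum_Icc_succ_top (by omega), show n + (i + 1) = (n + i) + 1 by ring, pc_step,
      ih]
    push_cast; ring

lemma r_split (m : ℕ) : r11 m + r01 m = pc m := by
  have h := Finset.card_filter_add_card_filter_not
    (s := (Finset.range m).filter (fun i => m.testBit i = true))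
    (p := fun i => m.testBit (i + 1) = true)
  rw [Finset.filter_filter, Finset.filter_filter] at h
  rw [r11, r01, pc, ← Finset.card_filter, ← h]
  congr 1
  refine congrArg Finset.card (Finset.filter_congr ?_)
  intro x _
  simp


theorem stmt_9 (n i : ℕ) (hi : 1 ≤ i) :
    (r11 (n + i) : ℤ) =
      (r11 n : ℤ) + (i : ℤ) - ∑ j ∈ Finset.Icc 1 i, (padicValNat 2 (n + j) : ℤ)
        + (r01 n : ℤ) - (r01 (n + i) : ℤ) := by
  have h1 := r_split n
  have h2 := r_split (n + i)
  have h3 := pc_sum n i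
  have h1' : (r11 n : ℤ) + r01 n = pc n := by exact_mod_cast congrArg (Nat.cast : ℕ → ℤ) h1
  have h2' : (r11 (n + i) : ℤ) + r01 (n + i) = pc (n + i) := by
    exact_mod_cast congrArg (Nat.cast : ℕ → ℤ) h2
  linarith
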